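/- arXiv:1407.0749 — 2 statements merged into one kernel-verified Lean document; each statement's English description precedes it below -/
import Mathlib

section
/- For a real matrix A with singular value decomposition A = U S Vᵀ (S diagonal with nonnegative entries), the matrix B = U S' Vᵀ, where S'ᵢᵢ = min(Sᵢᵢ, c), minimizes the Frobenius norm ‖A − B‖_F over all matrices B with spectral norm ‖B‖₂ ≤ c. -/
open Matrix

noncomputable def frobNorm {m n : ℕ} (A : Matrix (Fin m) (Fin n) ℝ) : ℝ :=
  Real.sqrt (∑ i, ∑ j, A i j ^ 2)

noncomputable def specNorm {m n : ℕ} (A : Matrix (Fin m) (Fin n) ℝ) : ℝ :=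
  ‖LinearMap.toContinuousLinearMap (Matrix.toEuclideanLin A)‖

section Aux

lemma specNorm_nonneg' {m n : ℕ} (A : Matrix (Fin m) (Fin n) ℝ) : 0 ≤ specNorm A :=
  norm_nonneg _

lemma mulVec_sq_le {m n : ℕ} (A : Matrix (Fin m) (Fin n) ℝ) (x : Fin n → ℝ) :
    ∑ i, (A.mulVec x i)^2 ≤ (specNorm A)^2 * ∑ j, (x j)^2 := by
  have h := (LinearMap.toContinuousLinearMap (Matrix.toEuclideanLin A)).le_opNorm
    ((WithLp.equiv 2 (Fin n → ℝ)).symm x)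
  rw [LinearMap.coe_toContinuousLinearMap', WithLp.equiv_symm_apply, Matrix.toEuclideanLin_apply_piLp_toLp] at h
  rw [EuclideanSpace.norm_eq, EuclideanSpace.norm_eq] at h
  simp only [PiLp.toLp_apply, Real.norm_eq_abs, sq_abs] at h
  have h1 : 0 ≤ ∑ i, (A.mulVec x i)^2 := Finset.sum_nonneg fun _ _ => sq_nonneg _
  have h2 : 0 ≤ ∑ j, (x j)^2 := Finset.sum_nonneg fun _ _ => sq_nonneg _
  calc ∑ i, (A.mulVec x i)^2 = Real.sqrt (∑ i, (A.mulVec x i)^2) ^ 2 := (Real.sq_sqrt h1).symm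
    _ ≤ (specNorm A * Real.sqrt (∑ j, (x j)^2))^2 := by
        apply pow_le_pow_left₀ (Real.sqrt_nonneg _) h
    _ = (specNorm A)^2 * ∑ j, (x j)^2 := by
        rw [mul_pow, Real.sq_sqrt h2]

lemma specNorm_le {m n : ℕ} (A : Matrix (Fin m) (Fin n) ℝ) (c : ℝ) (hc : 0 ≤ c)
    (h : ∀ x : Fin n → ℝ, ∑ i, (A.mulVec x i)^2 ≤ c^2 * ∑ j, (x j)^2) : specNorm A ≤ c := by
  apply ContinuousLinearMap.opNorm_le_bound _ hc
  intro y
  rw [LinearMap.coe_toContinuousLinearMap']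
  have hy : Matrix.toEuclideanLin A y =
      (WithLp.equiv 2 (Fin m → ℝ)).symm (A.mulVec ((WithLp.equiv 2 (Fin n → ℝ)) y)) := rfl
  rw [hy, EuclideanSpace.norm_eq, EuclideanSpace.norm_eq]
  simp only [WithLp.equiv_symm_apply, PiLp.toLp_apply, Real.norm_eq_abs, sq_abs]
  set x : Fin n → ℝ := (WithLp.equiv 2 (Fin n → ℝ)) y with hx
  calc Real.sqrt (∑ i, (A.mulVec x i)^2) ≤ Real.sqrt (c^2 * ∑ j, (x j)^2) :=
        Real.sqrt_le_sqrt (h x)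
    _ = c * Real.sqrt (∑ j, (x j)^2) := by
        rw [Real.sqrt_mul (sq_nonneg c), Real.sqrt_sq hc]

lemma ortho_mulVec_sq {k : ℕ} (U : Matrix (Fin k) (Fin k) ℝ) (hU : Uᵀ * U = 1)
    (y : Fin k → ℝ) : ∑ i, (U.mulVec y i)^2 = ∑ i, (y i)^2 := by
  have h1 : (U *ᵥ y) ᵥ* U = y := by
    rw [← Matrix.mulVec_transpose, Matrix.mulVec_mulVec, hU, Matrix.one_mulVec]
  have h2 : (U *ᵥ y) ⬝ᵥ (U *ᵥ y) = y ⬝ᵥ y := by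
    rw [Matrix.dotProduct_mulVec, h1]
  simpa [dotProduct, sq] using h2

lemma sq_sum_of_single {n : ℕ} (f : Fin n → ℝ) (k : ℕ)
    (hf : ∀ j : Fin n, (j : ℕ) ≠ k → f j = 0) :
    (∑ j, f j)^2 = ∑ j, (f j)^2 := by
  by_cases hk : k < n
  · rw [Finset.sum_eq_single ⟨k, hk⟩ (fun j _ hj => hf j (by simpa [Fin.ext_iff] using hj))
      (by simp), Finset.sum_eq_single ⟨k, hk⟩
      (fun j _ hj => by rw [hf j (by simpa [Fin.ext_iff] using hj)]; ring) (by simp)]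
  · have : ∀ j : Fin n, f j = 0 := fun j => hf j (by omega)
    simp [this]

lemma col_sq_le {m n : ℕ} (D : Matrix (Fin m) (Fin n) ℝ) (c : ℝ) (hc : 0 ≤ c)
    (hdiag : ∀ (i : Fin m) (j : Fin n), (i : ℕ) ≠ (j : ℕ) → D i j = 0)
    (hle : ∀ i j, |D i j| ≤ c)
    (j : Fin n) : ∑ i, (D i j)^2 ≤ c^2 := by
  calc ∑ i, (D i j)^2 ≤ ∑ i : Fin m, (if (i:ℕ) = (j:ℕ) then c^2 else 0) := by
        apply Finset.sum_le_sum
        intro i _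
        by_cases hij : (i:ℕ) = (j:ℕ)
        · simp only [hij, if_true]
          calc (D i j)^2 = |D i j|^2 := (sq_abs _).symm
            _ ≤ c^2 := pow_le_pow_left₀ (abs_nonneg _) (hle i j) 2
        · simp [hij, hdiag i j hij]
    _ ≤ c^2 := by
        by_cases hjm : (j:ℕ) < m
        · have : ∀ i : Fin m, ((i:ℕ) = (j:ℕ)) = (i = ⟨j, hjm⟩) := by
            intro i; simp [Fin.ext_iff]
          simp only [this]
          simp
        · have : ∀ i : Fin m, ¬((i:ℕ) = (j:ℕ)) := fun i => by omega
          simp [this, sq_nonneg c]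

lemma diag_mulVec_sq {m n : ℕ} (D : Matrix (Fin m) (Fin n) ℝ) (c : ℝ) (hc : 0 ≤ c)
    (hdiag : ∀ (i : Fin m) (j : Fin n), (i : ℕ) ≠ (j : ℕ) → D i j = 0)
    (hle : ∀ i j, |D i j| ≤ c)
    (z : Fin n → ℝ) : ∑ i, (D.mulVec z i)^2 ≤ c^2 * ∑ j, (z j)^2 := by
  have key : ∀ i, (D.mulVec z i)^2 = ∑ j, (D i j * z j)^2 := by
    intro i
    have : D.mulVec z i = ∑ j, D i j * z j := rfl
    rw [this, sq_sum_of_single (fun j => D i j * z j) (i:ℕ)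
      (fun j hj => by show D i j * z j = 0; rw [hdiag i j (fun h => hj h.symm)]; ring)]
  calc ∑ i, (D.mulVec z i)^2 = ∑ i, ∑ j, (D i j * z j)^2 := by simp [key]
    _ = ∑ j, (∑ i, (D i j)^2) * (z j)^2 := by
        rw [Finset.sum_comm]
        congr 1; ext j; rw [Finset.sum_mul]; congr 1; ext i; ring
    _ ≤ ∑ j, c^2 * (z j)^2 := by
        apply Finset.sum_le_sum
        intro j _
        exact mul_le_mul_of_nonneg_right (col_sq_le D c hc hdiag hle j) (sq_nonneg _)
    _ = c^2 * ∑ j, (z j)^2 := by rw [Finset.mul_sum]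

lemma abs_entry_le_specNorm {m n : ℕ} (A : Matrix (Fin m) (Fin n) ℝ) (i : Fin m) (j : Fin n) :
    |A i j| ≤ specNorm A := by
  have h := mulVec_sq_le A (Pi.single j 1)
  have hmv : A *ᵥ Pi.single j 1 = fun i => A i j := by
    ext i; simp [Matrix.mulVec_single]
  rw [hmv] at h
  have hx : ∑ k, ((Pi.single j 1 : Fin n → ℝ) k)^2 = 1 := by
    rw [Finset.sum_eq_single j (fun k _ hk => by simp [Pi.single_apply, hk]) (by simp)]
    simp
  rw [hx, mul_one] at h
  have h2 : (A i j)^2 ≤ (specNorm A)^2 := by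
    calc (A i j)^2 ≤ ∑ i', (A i' j)^2 :=
          Finset.single_le_sum (fun k _ => sq_nonneg (A k j)) (Finset.mem_univ i)
      _ ≤ (specNorm A)^2 := h
  calc |A i j| = Real.sqrt ((A i j)^2) := (Real.sqrt_sq_eq_abs _).symm
    _ ≤ Real.sqrt ((specNorm A)^2) := Real.sqrt_le_sqrt h2
    _ = specNorm A := Real.sqrt_sq (specNorm_nonneg' A)

lemma frobSq_trace {m n : ℕ} (X : Matrix (Fin m) (Fin n) ℝ) :
    ∑ i, ∑ j, X i j ^ 2 = Matrix.trace (Xᵀ * X) := by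
  simp only [Matrix.trace, Matrix.diag, Matrix.mul_apply, Matrix.transpose_apply, sq]
  exact Finset.sum_comm

lemma frobSq_conj {m n : ℕ} (U : Matrix (Fin m) (Fin m) ℝ) (V : Matrix (Fin n) (Fin n) ℝ)
    (hU : Uᵀ * U = 1) (hV : Vᵀ * V = 1) (X : Matrix (Fin m) (Fin n) ℝ) :
    ∑ i, ∑ j, (U * X * Vᵀ) i j ^ 2 = ∑ i, ∑ j, X i j ^ 2 := by
  rw [frobSq_trace, frobSq_trace]
  have h1 : (U * X * Vᵀ)ᵀ * (U * X * Vᵀ) = V * (Xᵀ * ((Uᵀ * U) * (X * Vᵀ))) := by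
    simp only [Matrix.transpose_mul, Matrix.transpose_transpose, Matrix.mul_assoc]
  rw [h1, hU, Matrix.one_mul, Matrix.trace_mul_comm, Matrix.mul_assoc, Matrix.mul_assoc,
    hV, Matrix.mul_one]

end Aux

/-- Thresholding the singular values at `c` gives the Frobenius projection onto the
spectral-norm ball of radius `c`. -/
theorem stmt0 {m n : ℕ} (A S : Matrix (Fin m) (Fin n) ℝ) (c : ℝ) (hc : 0 ≤ c)
    (U : Matrix (Fin m) (Fin m) ℝ) (V : Matrix (Fin n) (Fin n) ℝ)
    (hU : Uᵀ * U = 1) (hU' : U * Uᵀ = 1)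
    (hV : Vᵀ * V = 1) (hV' : V * Vᵀ = 1)
    (hSdiag : ∀ (i : Fin m) (j : Fin n), (i : ℕ) ≠ (j : ℕ) → S i j = 0)
    (hSpos : ∀ i j, 0 ≤ S i j)
    (hA : A = U * S * Vᵀ)
    (B : Matrix (Fin m) (Fin n) ℝ)
    (hB : B = U * (Matrix.of fun i j => min (S i j) c) * Vᵀ) :
    specNorm B ≤ c ∧
      ∀ B' : Matrix (Fin m) (Fin n) ℝ, specNorm B' ≤ c →
        frobNorm (A - B) ≤ frobNorm (A - B') := by
  set S' : Matrix (Fin m) (Fin n) ℝ := Matrix.of fun i j => min (S i j) c with hS'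
  have hS'diag : ∀ (i : Fin m) (j : Fin n), (i : ℕ) ≠ (j : ℕ) → S' i j = 0 := by
    intro i j hij
    show min (S i j) c = 0
    rw [hSdiag i j hij, min_eq_left hc]
  have hS'le : ∀ i j, |S' i j| ≤ c := by
    intro i j
    show |min (S i j) c| ≤ c
    rw [abs_of_nonneg (le_min (hSpos i j) hc)]
    exact min_le_right _ _
  constructor
  · -- spectral norm bound
    apply specNorm_le B c hc
    intro x
    have hmv : B *ᵥ x = U *ᵥ (S' *ᵥ (Vᵀ *ᵥ x)) := by
      rw [hB, Matrix.mulVec_mulVec, Matrix.mulVec_mulVec]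
    rw [hmv, ortho_mulVec_sq U hU]
    calc ∑ i, ((S' *ᵥ (Vᵀ *ᵥ x)) i)^2 ≤ c^2 * ∑ j, ((Vᵀ *ᵥ x) j)^2 :=
          diag_mulVec_sq S' c hc hS'diag hS'le _
      _ = c^2 * ∑ j, (x j)^2 := by
          rw [ortho_mulVec_sq Vᵀ (by rw [Matrix.transpose_transpose, hV'])]
  · intro B' hB'
    set M : Matrix (Fin m) (Fin n) ℝ := Uᵀ * B' * V with hM
    have hB'eq : B' = U * M * Vᵀ := by
      rw [hM]
      calc B' = (U * Uᵀ) * B' * (V * Vᵀ) := by rw [hU', hV', Matrix.one_mul, Matrix.mul_one]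
        _ = U * (Uᵀ * B' * V) * Vᵀ := by simp only [Matrix.mul_assoc]
    -- entries of M are bounded by c
    have hMspec : specNorm M ≤ c := by
      apply specNorm_le M c hc
      intro x
      have hmv : M *ᵥ x = Uᵀ *ᵥ (B' *ᵥ (V *ᵥ x)) := by
        rw [hM, Matrix.mulVec_mulVec, Matrix.mulVec_mulVec]
      rw [hmv, ortho_mulVec_sq Uᵀ (by rw [Matrix.transpose_transpose, hU'])]
      calc ∑ i, ((B' *ᵥ (V *ᵥ x)) i)^2 ≤ (specNorm B')^2 * ∑ j, ((V *ᵥ x) j)^2 :=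
            mulVec_sq_le B' _
        _ = (specNorm B')^2 * ∑ j, (x j)^2 := by rw [ortho_mulVec_sq V hV]
        _ ≤ c^2 * ∑ j, (x j)^2 := by
            apply mul_le_mul_of_nonneg_right _ (Finset.sum_nonneg fun _ _ => sq_nonneg _)
            exact pow_le_pow_left₀ (specNorm_nonneg' B') hB' 2
    have hMle : ∀ i j, |M i j| ≤ c := fun i j => (abs_entry_le_specNorm M i j).trans hMspec
    -- rewrite differences
    have hAB : A - B = U * (S - S') * Vᵀ := by
      rw [hA, hB, ← Matrix.sub_mul, ← Matrix.mul_sub]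
    have hAB' : A - B' = U * (S - M) * Vᵀ := by
      rw [hA, hB'eq, ← Matrix.sub_mul, ← Matrix.mul_sub]
    rw [frobNorm, frobNorm, hAB, hAB', frobSq_conj U V hU hV, frobSq_conj U V hU hV]
    apply Real.sqrt_le_sqrt
    apply Finset.sum_le_sum
    intro i _
    apply Finset.sum_le_sum
    intro j _
    -- pointwise comparison
    have hM1 := abs_le.mp (hMle i j)
    show (S i j - min (S i j) c)^2 ≤ (S i j - M i j)^2
    rcases le_total (S i j) c with hle | hle
    · rw [min_eq_left hle]
      simpa using sq_nonneg (S i j - M i j)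
    · rw [min_eq_right hle]
      nlinarith [hM1.1, hM1.2, hle]
end

section
/- For an Ising model p(x) ∝ exp(∑_{i,j} β_{ij} x_i x_j + ∑_i α_i x_i) on x ∈ {−1,+1}^n, the dependency matrix entry R_{ij} = max_{x,x': x_{−j}=x'_{−j}} ‖p(X_i|x_{−i}) − p(X_i|x'_{−i})‖_TV satisfies R_{ij} ≤ tanh|β_{ij}| ≤ |β_{ij}| for i ≠ j. -/
lemma tanh_le_tanh' {u v : ℝ} (h : u ≤ v) : Real.tanh u ≤ Real.tanh v := by
  rw [Real.tanh_eq_sinh_div_cosh, Real.tanh_eq_sinh_div_cosh,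
    div_le_div_iff₀ (Real.cosh_pos u) (Real.cosh_pos v)]
  have h2 : Real.sinh (u - v) ≤ 0 := Real.sinh_nonpos_iff.mpr (by linarith)
  nlinarith [Real.sinh_sub u v]

lemma tanh_le_self' {y : ℝ} (hy : 0 ≤ y) : Real.tanh y ≤ y := by
  have h : Real.sinh y ≤ y * Real.cosh y := by
    have mono : MonotoneOn (fun t => t * Real.cosh t - Real.sinh t) (Set.Ici 0) := by
      apply monotoneOn_of_deriv_nonneg (convex_Ici 0)
      · exact ((continuous_id.mul Real.continuous_cosh).sub Real.continuous_sinh).continuousOn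
      · exact ((differentiable_id.mul Real.differentiable_cosh).sub
          Real.differentiable_sinh).differentiableOn.mono interior_subset
      · intro t ht
        rw [interior_Ici, Set.mem_Ioi] at ht
        have H : HasDerivAt (fun t => t * Real.cosh t - Real.sinh t) (t * Real.sinh t) t := by
          have h1 := (hasDerivAt_id t).mul (Real.hasDerivAt_cosh t)
          have h2 := Real.hasDerivAt_sinh t
          exact (h1.sub h2).congr_deriv (by simp only [id, one_mul]; ring)
        rw [H.deriv]
        exact mul_nonneg ht.le (Real.sinh_nonneg_iff.mpr ht.le)
    have := mono (Set.self_mem_Ici) (Set.mem_Ici.mpr hy) hy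
    simpa using this
  rw [Real.tanh_eq_sinh_div_cosh, div_le_iff₀ (Real.cosh_pos y)]
  exact h

lemma sigm_two_eq (t : ℝ) : (1:ℝ) / (1 + Real.exp (-(2*t))) = (1 + Real.tanh t) / 2 := by
  have hE : (0:ℝ) < Real.exp t := Real.exp_pos t
  have h1 : Real.exp (-(2*t)) = Real.exp (-t) * Real.exp (-t) := by
    rw [← Real.exp_add]; ring_nf
  have h2 : Real.exp (-t) = (Real.exp t)⁻¹ := Real.exp_neg t
  rw [Real.tanh_eq_sinh_div_cosh, Real.sinh_eq, Real.cosh_eq, h1, h2]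
  have hc : Real.exp t + (Real.exp t)⁻¹ > 0 := by positivity
  have hd : 1 + (Real.exp t)⁻¹ * (Real.exp t)⁻¹ > 0 := by positivity
  field_simp
  ring

lemma tanh_diff_le (a a' : ℝ) :
    |Real.tanh a - Real.tanh a'| ≤ 2 * Real.tanh (|a - a'| / 2) := by
  set d := a - a' with hd
  have hca := Real.cosh_pos a
  have hca' := Real.cosh_pos a'
  have hch : (0:ℝ) < Real.cosh (d/2) := Real.cosh_pos _
  have key : Real.tanh a - Real.tanh a' = Real.sinh d / (Real.cosh a * Real.cosh a') := by
    rw [Real.tanh_eq_sinh_div_cosh, Real.tanh_eq_sinh_div_cosh, hd, Real.sinh_sub]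
    field_simp
  have hprod : Real.cosh (d/2) ^ 2 ≤ Real.cosh a * Real.cosh a' := by
    have h1 : Real.cosh (a + a') + Real.cosh (a - a') = 2 * (Real.cosh a * Real.cosh a') := by
      rw [Real.cosh_add, Real.cosh_sub]; ring
    have h2 : Real.cosh d = 2 * Real.cosh (d/2) ^ 2 - 1 := by
      have hc2 := Real.cosh_two_mul (d/2)
      have hsq := Real.cosh_sq_sub_sinh_sq (d/2)
      have : Real.cosh (2 * (d/2)) = 2 * Real.cosh (d/2)^2 - 1 := by nlinarith
      rwa [show 2 * (d/2) = d by ring] at this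
    have h3 : 1 ≤ Real.cosh (a + a') := Real.one_le_cosh _
    nlinarith
  have hsinh : |Real.sinh d| = 2 * Real.sinh (|d|/2) * Real.cosh (d/2) := by
    rw [Real.abs_sinh]
    have h5 : Real.sinh |d| = 2 * Real.sinh (|d|/2) * Real.cosh (|d|/2) := by
      have := Real.sinh_two_mul (|d|/2)
      rwa [show 2 * (|d|/2) = |d| by ring] at this
    rw [h5, show |d|/2 = |d/2| by rw [abs_div]; norm_num, Real.cosh_abs]
  have htanh : Real.tanh (|d|/2) = Real.sinh (|d|/2) / Real.cosh (d/2) := by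
    rw [Real.tanh_eq_sinh_div_cosh, show |d|/2 = |d/2| by rw [abs_div]; norm_num, Real.cosh_abs]
  rw [key, abs_div, abs_of_pos (mul_pos hca hca'), div_le_iff₀ (mul_pos hca hca'), hsinh, htanh]
  have hs : 0 ≤ Real.sinh (|d|/2) := Real.sinh_nonneg_iff.mpr (by positivity)
  have hq : 0 ≤ Real.sinh (|d|/2) / Real.cosh (d/2) := div_nonneg hs hch.le
  have h4 : Real.sinh (|d|/2) / Real.cosh (d/2) * Real.cosh (d/2) = Real.sinh (|d|/2) :=
    div_mul_cancel₀ _ hch.ne'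
  nlinarith [mul_nonneg hq (sub_nonneg.mpr hprod), h4]

open Matrix
/-- The logistic sigmoid. -/
noncomputable def sigm (t : ℝ) : ℝ := 1 / (1 + Real.exp (-t))

lemma sigm_tanh (t : ℝ) : sigm (2 * t) = (1 + Real.tanh t) / 2 := by
  unfold sigm
  rw [show -(2*t) = -(2*t) from rfl]
  exact sigm_two_eq t


/-- Conditional distribution of `x_i ∈ {-1,+1}` (encoded by `Bool`) in an Ising model,
given the rest of a configuration `x`: the local field is `∑_{k ≠ i} β_{ik} x_k + α_i`. -/
noncomputable def isingCond {n : ℕ} (β : Matrix (Fin n) (Fin n) ℝ) (α : Fin n → ℝ)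
    (i : Fin n) (x : Fin n → ℝ) : Bool → ℝ :=
  fun b =>
    if b then sigm (2 * ((∑ k ∈ Finset.univ.erase i, β i k * x k) + α i))
    else 1 - sigm (2 * ((∑ k ∈ Finset.univ.erase i, β i k * x k) + α i))

/-- Every entry of the Ising dependency matrix satisfies
`R_{ij} ≤ tanh |β_{ij}| ≤ |β_{ij}|`: for any two ±1 configurations differing only at
coordinate `j ≠ i`, the TV distance between the conditionals of `x_i` is at most
`tanh |β_{ij}|`. -/
theorem stmt4 {n : ℕ} (β : Matrix (Fin n) (Fin n) ℝ) (α : Fin n → ℝ)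
    (hβsym : βᵀ = β) (hβdiag : ∀ i, β i i = 0)
    (i j : Fin n) (hij : i ≠ j)
    (x x' : Fin n → ℝ)
    (hx : ∀ k, x k = 1 ∨ x k = -1) (hx' : ∀ k, x' k = 1 ∨ x' k = -1)
    (hagree : ∀ k, k ≠ j → x k = x' k) :
    (1 / 2) * ∑ b : Bool, |isingCond β α i x b - isingCond β α i x' b|
      ≤ Real.tanh |β i j| ∧ Real.tanh |β i j| ≤ |β i j| := by
  constructor
  · set a := (∑ k ∈ Finset.univ.erase i, β i k * x k) + α i with ha
    set a' := (∑ k ∈ Finset.univ.erase i, β i k * x' k) + α i with ha'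
    have hsum : (1 / 2) * ∑ b : Bool, |isingCond β α i x b - isingCond β α i x' b|
        = |sigm (2*a) - sigm (2*a')| := by
      rw [Fintype.sum_bool]
      simp only [isingCond, Bool.false_eq_true, if_true, if_false, ← ha, ← ha']
      rw [show (1 - sigm (2*a)) - (1 - sigm (2*a')) = -(sigm (2*a) - sigm (2*a')) by ring,
        abs_neg]
      ring
    have hdiff : a - a' = β i j * (x j - x' j) := by
      have : (∑ k ∈ Finset.univ.erase i, β i k * x k)
          - (∑ k ∈ Finset.univ.erase i, β i k * x' k)
          = ∑ k ∈ Finset.univ.erase i, (β i k * x k - β i k * x' k) := by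
        rw [Finset.sum_sub_distrib]
      have hmem : j ∈ Finset.univ.erase i := Finset.mem_erase.mpr ⟨fun h => hij h.symm, Finset.mem_univ j⟩
      have hz : ∀ k ∈ Finset.univ.erase i, k ≠ j → β i k * x k - β i k * x' k = 0 := by
        intro k _ hk
        rw [hagree k hk]; ring
      have := Finset.sum_eq_single_of_mem j hmem hz
      rw [ha, ha']
      calc (∑ k ∈ Finset.univ.erase i, β i k * x k) + α i
            - ((∑ k ∈ Finset.univ.erase i, β i k * x' k) + α i)
          = ∑ k ∈ Finset.univ.erase i, (β i k * x k - β i k * x' k) := by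
            rw [Finset.sum_sub_distrib]; ring
        _ = β i j * x j - β i j * x' j := this
        _ = β i j * (x j - x' j) := by ring
    have habs : |a - a'| / 2 ≤ |β i j| := by
      rw [hdiff, abs_mul]
      have : |x j - x' j| ≤ 2 := by
        rcases hx j with h1 | h1 <;> rcases hx' j with h2 | h2 <;> rw [h1, h2] <;> norm_num
      nlinarith [abs_nonneg (β i j)]
    rw [hsum, sigm_tanh, sigm_tanh,
      show (1 + Real.tanh a)/2 - (1 + Real.tanh a')/2 = (Real.tanh a - Real.tanh a')/2 by ring,
      abs_div, abs_of_pos (by norm_num : (0:ℝ) < 2), div_le_iff₀ (by norm_num : (0:ℝ) < 2)]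
    calc |Real.tanh a - Real.tanh a'| ≤ 2 * Real.tanh (|a - a'|/2) := tanh_diff_le a a'
      _ ≤ 2 * Real.tanh |β i j| := by
          have := tanh_le_tanh' habs
          linarith
      _ = Real.tanh |β i j| * 2 := by ring
  · exact tanh_le_self' (abs_nonneg _)
end
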